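/- arXiv:2602.11383 — 3 statements merged into one kernel-verified Lean document; each statement's English description precedes it below -/
import Mathlib

section
/- Let C : ℝ^d → ℝ be L-smooth, let θ ∈ ℝ^d be fixed, let η > 0 and p_min ∈ (0,1], and let δ be a random freezing mask whose coordinates satisfy E[δ_k] ≥ p_min for all k. Then the masked gradient step satisfies the expected descent inequality E[C(θ − η (δ ⊙ ∇C(θ)))] ≤ C(θ) − η (p_min − Lη/2) ‖∇C(θ)‖². -/
open MeasureTheory

lemma quad_bound {E : Type*} [NormedAddCommGroup E] [InnerProductSpace ℝ E] [CompleteSpace E]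
    (C : E → ℝ) (L : ℝ) (hdiff : Differentiable ℝ C)
    (hlip : ∀ x y, ‖gradient C x - gradient C y‖ ≤ L * ‖x - y‖) (x y : E) :
    |C y - C x - inner ℝ (gradient C x) (y - x)| ≤ L / 2 * ‖y - x‖ ^ 2 := by
  set v := y - x with hv
  have hgradcont : Continuous fun z => gradient C z := by
    refine (LipschitzWith.of_dist_le_mul (K := L.toNNReal) (f := fun z => gradient C z) ?_).continuous
    intro a b
    simp only [dist_eq_norm]
    calc ‖gradient C a - gradient C b‖ ≤ L * ‖a - b‖ := hlip a b
      _ ≤ L.toNNReal * ‖a - b‖ :=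
          mul_le_mul_of_nonneg_right (Real.le_coe_toNNReal L) (norm_nonneg _)
  have hderiv : ∀ t : ℝ, HasDerivAt (fun s : ℝ => C (x + s • v))
      (inner ℝ (gradient C (x + t • v)) v) t := by
    intro t
    have h1 : HasDerivAt (fun s : ℝ => x + s • v) v t := by
      simpa using ((hasDerivAt_id t).smul_const v).const_add x
    have h2 : HasFDerivAt C (InnerProductSpace.toDual ℝ E (gradient C (x + t • v))) (x + t • v) := by
      have := (hdiff (x + t • v)).hasGradientAt
      rwa [hasGradientAt_iff_hasFDerivAt] at this
    have := h2.comp_hasDerivAt t h1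
    simpa [Function.comp_def] using this
  have hcont : Continuous fun t : ℝ => (inner ℝ (gradient C (x + t • v)) v : ℝ) := by
    exact (hgradcont.comp (by continuity)).inner continuous_const
  have hftc : ∫ t in (0:ℝ)..1, (inner ℝ (gradient C (x + t • v)) v : ℝ)
      = C (x + (1:ℝ) • v) - C (x + (0:ℝ) • v) := by
    exact intervalIntegral.integral_eq_sub_of_hasDerivAt (fun t _ => hderiv t)
      (hcont.intervalIntegrable 0 1)
  have hxy : x + (1:ℝ) • v = y := by rw [hv]; abel_nf; module
  have h0 : x + (0:ℝ) • v = x := by simp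
  rw [hxy, h0] at hftc
  have hsplit : C y - C x - inner ℝ (gradient C x) v
      = ∫ t in (0:ℝ)..1, ((inner ℝ (gradient C (x + t • v)) v : ℝ) - inner ℝ (gradient C x) v) := by
    rw [intervalIntegral.integral_sub (hcont.intervalIntegrable 0 1)
      (intervalIntegrable_const), hftc]
    simp
  rw [hsplit]
  have hbound : ∀ t ∈ Set.Icc (0:ℝ) 1,
      |(inner ℝ (gradient C (x + t • v)) v : ℝ) - inner ℝ (gradient C x) v| ≤ L * t * ‖v‖ ^ 2 := by
    intro t ht
    have : (inner ℝ (gradient C (x + t • v)) v : ℝ) - inner ℝ (gradient C x) v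
        = inner ℝ (gradient C (x + t • v) - gradient C x) v := by
      rw [inner_sub_left]
    rw [this]
    calc |(inner ℝ (gradient C (x + t • v) - gradient C x) v : ℝ)|
        ≤ ‖gradient C (x + t • v) - gradient C x‖ * ‖v‖ := abs_real_inner_le_norm _ _
      _ ≤ (L * ‖x + t • v - x‖) * ‖v‖ := by gcongr; exact hlip _ _
      _ = L * t * ‖v‖ ^ 2 := by
          rw [add_sub_cancel_left, norm_smul, Real.norm_eq_abs, abs_of_nonneg ht.1]; ring
  calc |∫ t in (0:ℝ)..1, ((inner ℝ (gradient C (x + t • v)) v : ℝ) - inner ℝ (gradient C x) v)|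
      ≤ ∫ t in (0:ℝ)..1, |(inner ℝ (gradient C (x + t • v)) v : ℝ) - inner ℝ (gradient C x) v| :=
        intervalIntegral.abs_integral_le_integral_abs zero_le_one
    _ ≤ ∫ t in (0:ℝ)..1, L * t * ‖v‖ ^ 2 := by
        apply intervalIntegral.integral_mono_on zero_le_one
        · exact ((hcont.sub continuous_const).abs).intervalIntegrable 0 1
        · exact (Continuous.intervalIntegrable (by continuity) 0 1)
        · exact hbound
    _ = L / 2 * ‖v‖ ^ 2 := by
        have heq : (fun t : ℝ => L * t * ‖v‖ ^ 2) = fun t : ℝ => (L * ‖v‖ ^ 2) * t := by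
          funext t; ring
        rw [heq, intervalIntegral.integral_const_mul, integral_id]
        ring

set_option maxHeartbeats 1000000 in
/-- Let `C : ℝ^d → ℝ` be `L`-smooth (differentiable with `L`-Lipschitz
gradient), `θ` fixed, `η > 0`, `p_min ∈ (0,1]`, and let `δ` be a random freezing mask
(coordinates in `{0,1}` a.s.) with `E[δ_k] ≥ p_min` for all `k`. Then the masked gradient step
satisfies `E[C(θ − η (δ ⊙ ∇C(θ)))] ≤ C(θ) − η (p_min − Lη/2) ‖∇C(θ)‖²`. -/
theorem wsbd_expected_descent {Ω : Type*} [MeasurableSpace Ω]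
    (μ : Measure Ω) [IsProbabilityMeasure μ] {d : ℕ} (hd : 0 < d)
    (C : EuclideanSpace ℝ (Fin d) → ℝ) (L : ℝ)
    (hdiff : Differentiable ℝ C)
    (hlip : ∀ x y, ‖gradient C x - gradient C y‖ ≤ L * ‖x - y‖)
    (θ : EuclideanSpace ℝ (Fin d)) (η pmin : ℝ)
    (hη : 0 < η) (hpmin : 0 < pmin) (hpmin1 : pmin ≤ 1)
    (δ : Ω → Fin d → ℝ) (hmeas : ∀ k, Measurable fun ω => δ ω k)
    (h01 : ∀ k, ∀ᵐ ω ∂μ, δ ω k = 0 ∨ δ ω k = 1)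
    (hE : ∀ k, pmin ≤ ∫ ω, δ ω k ∂μ) :
    ∫ ω, C (θ - η • (WithLp.equiv 2 (Fin d → ℝ)).symm
        (fun k => δ ω k * gradient C θ k)) ∂μ ≤
      C θ - η * (pmin - L * η / 2) * ‖gradient C θ‖ ^ 2 := by
  set g : EuclideanSpace ℝ (Fin d) := gradient C θ with hg
  -- L is nonnegative
  have hL : 0 ≤ L := by
    have h1 := hlip (EuclideanSpace.single (⟨0, hd⟩ : Fin d) (1:ℝ)) 0
    have h2 : ‖(EuclideanSpace.single (⟨0, hd⟩ : Fin d) (1:ℝ)) - 0‖ = 1 := by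
      simp [EuclideanSpace.norm_single]
    rw [h2, mul_one] at h1
    exact le_trans (norm_nonneg _) h1
  set w : Ω → EuclideanSpace ℝ (Fin d) :=
    fun ω => (WithLp.equiv 2 (Fin d → ℝ)).symm (fun k => δ ω k * g k) with hwdef
  set Y : Ω → EuclideanSpace ℝ (Fin d) := fun ω => θ - η • w ω with hYdef
  set S : Ω → ℝ := fun ω => ∑ k, δ ω k * g k ^ 2 with hSdef
  have hgs : ‖g‖ ^ 2 = ∑ k, g k ^ 2 := by
    rw [PiLp.norm_sq_eq_of_L2]
    simp [Real.norm_eq_abs, sq_abs]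
  have hwk : ∀ ω k, w ω k = δ ω k * g k := fun ω k => rfl
  -- coordinate inner products
  have hinner : ∀ ω, (inner ℝ g (w ω) : ℝ) = ∑ k, g k * (δ ω k * g k) := by
    intro ω
    simp [PiLp.inner_apply, RCLike.inner_apply, hwk]
    exact Finset.sum_congr rfl fun k _ => by ring
  have hwnorm : ∀ ω, ‖w ω‖ ^ 2 = ∑ k, (δ ω k * g k) * (δ ω k * g k) := by
    intro ω
    rw [PiLp.norm_sq_eq_of_L2]
    refine Finset.sum_congr rfl fun k _ => ?_
    rw [Real.norm_eq_abs, sq_abs, hwk]; ring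
  -- a.e. 0/1 valued
  have hae : ∀ᵐ ω ∂μ, ∀ k, δ ω k = 0 ∨ δ ω k = 1 := (ae_all_iff).mpr h01
  -- key pointwise facts on the a.e. set
  have hkey : ∀ ω, (∀ k, δ ω k = 0 ∨ δ ω k = 1) →
      (inner ℝ g (w ω) : ℝ) = S ω ∧ ‖w ω‖ ^ 2 = S ω ∧ 0 ≤ S ω ∧ S ω ≤ ‖g‖ ^ 2 := by
    intro ω hω
    have hδsq : ∀ k, δ ω k * δ ω k = δ ω k := by
      intro k; rcases hω k with h | h <;> rw [h] <;> ring
    have hδ01 : ∀ k, 0 ≤ δ ω k ∧ δ ω k ≤ 1 := by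
      intro k; rcases hω k with h | h <;> rw [h] <;> norm_num
    refine ⟨?_, ?_, ?_, ?_⟩
    · rw [hinner]; apply Finset.sum_congr rfl; intro k _; ring
    · rw [hwnorm]; apply Finset.sum_congr rfl; intro k _
      calc (δ ω k * g k) * (δ ω k * g k) = (δ ω k * δ ω k) * g k ^ 2 := by ring
        _ = δ ω k * g k ^ 2 := by rw [hδsq]
    · apply Finset.sum_nonneg; intro k _
      exact mul_nonneg (hδ01 k).1 (sq_nonneg _)
    · rw [hgs]; apply Finset.sum_le_sum; intro k _
      nlinarith [(hδ01 k).2, sq_nonneg (g k), (hδ01 k).1]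
  -- pointwise descent bound a.e.
  have hYθ : ∀ ω, Y ω - θ = -(η • w ω) := by intro ω; simp [hYdef]
  have hquad : ∀ ω, |C (Y ω) - C θ - inner ℝ g (Y ω - θ)| ≤ L / 2 * ‖Y ω - θ‖ ^ 2 :=
    fun ω => quad_bound C L hdiff hlip θ (Y ω)
  set c : ℝ := L / 2 * η ^ 2 - η with hc
  have haebd : ∀ᵐ ω ∂μ, C (Y ω) ≤ C θ + c * S ω := by
    filter_upwards [hae] with ω hω
    obtain ⟨h1, h2, h3, h4⟩ := hkey ω hω
    have hq := (abs_le.mp (hquad ω)).2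
    rw [hYθ ω] at hq
    rw [inner_neg_right, inner_smul_right, norm_neg, norm_smul, Real.norm_eq_abs,
      abs_of_pos hη, mul_pow, h1, h2] at hq
    have heq : C θ + c * S ω = C θ + L / 2 * (η ^ 2 * S ω) - η * S ω := by
      rw [hc]; ring
    rw [heq]; linarith [hq]
  -- a.e. norm bound for integrability
  have hM : ∀ᵐ ω ∂μ, ‖C (Y ω)‖ ≤ |C θ| + ‖g‖ * (η * ‖g‖) + L / 2 * (η * ‖g‖) ^ 2 := by
    filter_upwards [hae] with ω hω
    obtain ⟨h1, h2, h3, h4⟩ := hkey ω hω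
    have hwle : ‖w ω‖ ≤ ‖g‖ := by
      have := h2.le.trans h4
      nlinarith [norm_nonneg (w ω), norm_nonneg g]
    have hYn : ‖Y ω - θ‖ = η * ‖w ω‖ := by
      rw [hYθ ω, norm_neg, norm_smul, Real.norm_eq_abs, abs_of_pos hη]
    have ht : ‖Y ω - θ‖ ≤ η * ‖g‖ := by
      rw [hYn]; exact mul_le_mul_of_nonneg_left hwle hη.le
    have e1 : C (Y ω) = (C (Y ω) - C θ - inner ℝ g (Y ω - θ)) + inner ℝ g (Y ω - θ) + C θ := by
      ring
    rw [Real.norm_eq_abs, e1]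
    calc |(C (Y ω) - C θ - inner ℝ g (Y ω - θ)) + inner ℝ g (Y ω - θ) + C θ|
        ≤ |C (Y ω) - C θ - inner ℝ g (Y ω - θ)| + |(inner ℝ g (Y ω - θ) : ℝ)| + |C θ| :=
          abs_add_three _ _ _
      _ ≤ L / 2 * ‖Y ω - θ‖ ^ 2 + ‖g‖ * ‖Y ω - θ‖ + |C θ| :=
          add_le_add (add_le_add (hquad ω) (abs_real_inner_le_norm _ _)) le_rfl
      _ ≤ L / 2 * (η * ‖g‖) ^ 2 + ‖g‖ * (η * ‖g‖) + |C θ| := by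
          have h0 := norm_nonneg (Y ω - θ)
          have hsq : ‖Y ω - θ‖ ^ 2 ≤ (η * ‖g‖) ^ 2 := by nlinarith
          have hb1 := mul_le_mul_of_nonneg_left hsq (by positivity : (0:ℝ) ≤ L / 2)
          have hb2 := mul_le_mul_of_nonneg_left ht (norm_nonneg g)
          linarith
      _ = |C θ| + ‖g‖ * (η * ‖g‖) + L / 2 * (η * ‖g‖) ^ 2 := by ring
  -- measurability
  have hYmeas : Measurable Y := by
    have h1 : Measurable fun ω => (fun k => δ ω k * g k) :=
      measurable_pi_lambda _ (fun k => (hmeas k).mul_const _)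
    have h2 : Continuous fun p : Fin d → ℝ =>
        θ - η • (WithLp.equiv 2 (Fin d → ℝ)).symm p :=
      continuous_const.sub ((PiLp.continuous_toLp (p := 2) (β := fun _ : Fin d => ℝ)).const_smul η)
    exact h2.measurable.comp h1
  have hCYmeas : AEStronglyMeasurable (fun ω => C (Y ω)) μ :=
    ((hdiff.continuous.measurable).comp hYmeas).aestronglyMeasurable
  have hCYint : Integrable (fun ω => C (Y ω)) μ :=
    Integrable.mono' (integrable_const _) hCYmeas hM
  -- integrability of S
  have hδint : ∀ k, Integrable (fun ω => δ ω k) μ := by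
    intro k
    refine Integrable.mono' (integrable_const 1) (hmeas k).aestronglyMeasurable ?_
    filter_upwards [h01 k] with ω hω
    rcases hω with h | h <;> rw [h] <;> norm_num
  have hSint : Integrable S μ := by
    rw [hSdef]
    exact integrable_finset_sum _ (fun k _ => (hδint k).mul_const _)
  -- expectation of S
  have hES : ∫ ω, S ω ∂μ = ∑ k, (∫ ω, δ ω k ∂μ) * g k ^ 2 := by
    rw [hSdef, integral_finset_sum _ (fun k _ => (hδint k).mul_const _)]
    exact Finset.sum_congr rfl fun k _ => integral_mul_const _ _
  have hδle1 : ∀ k, ∫ ω, δ ω k ∂μ ≤ 1 := by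
    intro k
    calc ∫ ω, δ ω k ∂μ ≤ ∫ _, (1:ℝ) ∂μ := by
          apply integral_mono_ae (hδint k) (integrable_const 1)
          filter_upwards [h01 k] with ω hω
          rcases hω with h | h <;> rw [h] <;> norm_num
      _ = 1 := by simp
  have hESub : ∫ ω, S ω ∂μ ≤ ‖g‖ ^ 2 := by
    rw [hES, hgs]
    apply Finset.sum_le_sum; intro k _
    nlinarith [hδle1 k, sq_nonneg (g k), (hE k), hpmin.le]
  have hESlb : pmin * ‖g‖ ^ 2 ≤ ∫ ω, S ω ∂μ := by
    rw [hES, hgs, Finset.mul_sum]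
    apply Finset.sum_le_sum; intro k _
    have := hE k
    nlinarith [sq_nonneg (g k)]
  -- putting it together
  have hint : (∫ ω, C (Y ω) ∂μ) ≤ ∫ ω, (C θ + c * S ω) ∂μ := by
    apply integral_mono_ae hCYint _ haebd
    exact (integrable_const _).add (hSint.const_mul c)
  have hRHS : ∫ ω, (C θ + c * S ω) ∂μ = C θ + c * ∫ ω, S ω ∂μ := by
    rw [integral_add (integrable_const _) (hSint.const_mul c), integral_const,
      integral_const_mul]
    simp
  have hgoal : ∫ ω, C (Y ω) ∂μ ≤ C θ - η * (pmin - L * η / 2) * ‖g‖ ^ 2 := by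
    rw [hRHS] at hint
    refine hint.trans ?_
    have hES0 := hESub
    have hES1 := hESlb
    rw [hc]
    nlinarith [hη, hL, sq_nonneg ‖g‖, mul_nonneg hL (sq_nonneg η),
      mul_le_mul_of_nonneg_left hESub (by positivity : (0:ℝ) ≤ L / 2 * η ^ 2),
      mul_le_mul_of_nonneg_left hESlb hη.le]
  exact hgoal
end

section
/- Let C : ℝ^d → ℝ be L-smooth and bounded below by C*. Let (F_t)_{t≥0} be a filtration on a probability space, let (θ^t)_{t≥0} be random vectors in ℝ^d with θ^t F_t-measurable and C(θ^t) and ‖∇C(θ^t)‖² integrable for every t, and let (δ^t)_{t≥0} be random freezing masks satisfying E[δ^t_k | F_t] ≥ p_min almost surely for every coordinate k, with p_min > 0. Suppose the WSBD-SGD update θ^{t+1} = θ^t − η (δ^t ⊙ ∇C(θ^t)) holds almost surely, where η > 0 satisfies C_η := η (p_min − Lη/2) > 0. Then for every T ≥ 1, Σ_{t=0}^{T−1} E[‖∇C(θ^t)‖²] ≤ (E[C(θ⁰)] − C*) / C_η. -/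
set_option maxHeartbeats 1000000
open MeasureTheory

lemma descent_lemma {F : Type*} [NormedAddCommGroup F] [InnerProductSpace ℝ F] [CompleteSpace F]
    (C : F → ℝ) (L : ℝ) (hdiff : Differentiable ℝ C)
    (hlip : ∀ x y, ‖gradient C x - gradient C y‖ ≤ L * ‖x - y‖) (x v : F) :
    C (x + v) ≤ C x + inner ℝ (gradient C x) v + L / 2 * ‖v‖ ^ 2 := by
  set ip : ℝ := inner ℝ (gradient C x) v with hip
  set K : ℝ := L / 2 * ‖v‖ ^ 2 with hK
  have hcomp : ∀ s : ℝ, HasDerivAt (fun s : ℝ => C (x + s • v))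
      (inner ℝ (gradient C (x + s • v)) v : ℝ) s := by
    intro s
    have hline : HasDerivAt (fun s : ℝ => x + s • v) v s := by
      simpa using (((hasDerivAt_id s).smul_const v).const_add x)
    have h1 := ((hdiff (x + s • v)).hasFDerivAt).comp_hasDerivAt s hline
    have h2 : (fderiv ℝ C (x + s • v)) v = (inner ℝ (gradient C (x + s • v)) v : ℝ) := by
      rw [gradient, InnerProductSpace.toDual_symm_apply]
    rw [← h2]; exact h1
  set g : ℝ → ℝ := fun s => C (x + s • v) - s * ip - s ^ 2 * K with hg
  have hgderiv : ∀ s : ℝ, HasDerivAt g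
      ((inner ℝ (gradient C (x + s • v)) v : ℝ) - ip - 2 * s * K) s := by
    intro s
    have h3 : HasDerivAt (fun s : ℝ => s * ip) ip s := hasDerivAt_mul_const ip
    have h4 : HasDerivAt (fun s : ℝ => s ^ 2 * K) (2 * s * K) s := by
      have := (hasDerivAt_pow 2 s).mul_const K
      simpa [mul_comm] using this
    exact ((hcomp s).sub h3).sub h4
  have hanti : AntitoneOn g (Set.Icc 0 1) := by
    apply antitoneOn_of_deriv_nonpos (convex_Icc 0 1)
    · exact Continuous.continuousOn (by
        have : ∀ s, DifferentiableAt ℝ g s := fun s => (hgderiv s).differentiableAt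
        exact (Differentiable.continuous this))
    · exact fun s _ => ((hgderiv s).differentiableAt).differentiableWithinAt
    · intro s hs
      rw [interior_Icc] at hs
      rw [(hgderiv s).deriv]
      have h5 : (inner ℝ (gradient C (x + s • v)) v : ℝ) - ip ≤ 2 * s * K := by
        have h6 : (inner ℝ (gradient C (x + s • v)) v : ℝ) - ip
            = inner ℝ (gradient C (x + s • v) - gradient C x) v := by
          rw [inner_sub_left]
        rw [h6]
        calc (inner ℝ (gradient C (x + s • v) - gradient C x) v : ℝ)
            ≤ ‖gradient C (x + s • v) - gradient C x‖ * ‖v‖ := real_inner_le_norm _ _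
          _ ≤ (L * ‖x + s • v - x‖) * ‖v‖ := by
              apply mul_le_mul_of_nonneg_right (hlip _ _) (norm_nonneg _)
          _ = 2 * s * K := by
              rw [hK]; simp [norm_smul, abs_of_pos hs.1]; ring
      linarith
  have h01 : g 1 ≤ g 0 := hanti (by norm_num) (by norm_num) zero_le_one
  simp only [hg, one_smul, zero_smul, add_zero, one_pow, one_mul, zero_mul,
    zero_pow, sub_zero] at h01
  · linarith

lemma euclid_norm_sq_eq {d : ℕ} (y : EuclideanSpace ℝ (Fin d)) :
    ‖y‖ ^ 2 = ∑ k, (y k) ^ 2 := by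
  rw [EuclideanSpace.norm_eq, Real.sq_sqrt (Finset.sum_nonneg fun i _ => sq_nonneg _)]
  simp [sq_abs]

lemma euclid_coord_sq_le {d : ℕ} (y : EuclideanSpace ℝ (Fin d)) (k : Fin d) :
    (y k) ^ 2 ≤ ‖y‖ ^ 2 := by
  rw [euclid_norm_sq_eq]
  exact Finset.single_le_sum (fun i _ => sq_nonneg (y i)) (Finset.mem_univ k)

/-- (Summed descent bound for WSBD-SGD.) Let `C : ℝ^d → ℝ` be `L`-smooth
and bounded below by `C*`. Let `(ℱ_t)` be a filtration, `(θ^t)` adapted random vectors with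
`C(θ^t)` and `‖∇C(θ^t)‖²` integrable, and `(δ^t)` random freezing masks (coordinates in
`{0,1}` a.s.) with `E[δ^t_k | ℱ_t] ≥ p_min > 0` a.s. If the WSBD-SGD update
`θ^{t+1} = θ^t − η (δ^t ⊙ ∇C(θ^t))` holds a.s. with `η > 0` and
`C_η := η (p_min − Lη/2) > 0`, then for every `T ≥ 1`,
`Σ_{t<T} E[‖∇C(θ^t)‖²] ≤ (E[C(θ⁰)] − C*) / C_η`. -/
theorem wsbd_sgd_summed_bound {Ω : Type*} {m0 : MeasurableSpace Ω}
    (μ : Measure Ω) [IsProbabilityMeasure μ] {d : ℕ} (hd : 0 < d)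
    (C : EuclideanSpace ℝ (Fin d) → ℝ) (L Cstar : ℝ)
    (hdiff : Differentiable ℝ C)
    (hlip : ∀ x y, ‖gradient C x - gradient C y‖ ≤ L * ‖x - y‖)
    (hbdd : ∀ x, Cstar ≤ C x)
    (ℱ : Filtration ℕ m0)
    (θ : ℕ → Ω → EuclideanSpace ℝ (Fin d))
    (hadapt : ∀ t, StronglyMeasurable[ℱ t] (θ t))
    (hCint : ∀ t, Integrable (fun ω => C (θ t ω)) μ)
    (hgint : ∀ t, Integrable (fun ω => ‖gradient C (θ t ω)‖ ^ 2) μ)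
    (δ : ℕ → Ω → Fin d → ℝ)
    (hδmeas : ∀ t k, Measurable fun ω => δ t ω k)
    (h01 : ∀ t k, ∀ᵐ ω ∂μ, δ t ω k = 0 ∨ δ t ω k = 1)
    (pmin : ℝ) (hpmin : 0 < pmin)
    (hcond : ∀ t k, ∀ᵐ ω ∂μ, pmin ≤ (μ[fun ω' => δ t ω' k | ℱ t]) ω)
    (η Cη : ℝ) (hη : 0 < η)
    (hCη : Cη = η * (pmin - L * η / 2)) (hCηpos : 0 < Cη)
    (hupdate : ∀ t, ∀ᵐ ω ∂μ,
      θ (t + 1) ω = θ t ω - η • (WithLp.equiv 2 (Fin d → ℝ)).symm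
        (fun k => δ t ω k * gradient C (θ t ω) k))
    (T : ℕ) (hT : 1 ≤ T) :
    ∑ t ∈ Finset.range T, ∫ ω, ‖gradient C (θ t ω)‖ ^ 2 ∂μ ≤
      ((∫ ω, C (θ 0 ω) ∂μ) - Cstar) / Cη := by
  classical
  -- notation
  set g : ℕ → Ω → EuclideanSpace ℝ (Fin d) := fun t ω => gradient C (θ t ω) with hgdef
  set S : ℕ → Ω → ℝ := fun t ω => ∑ k, δ t ω k * (g t ω k) ^ 2 with hSdef
  -- L is nonnegative
  have hLnn : 0 ≤ L := by
    have h1 := hlip 0 (EuclideanSpace.single (⟨0, hd⟩ : Fin d) (1 : ℝ))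
    rw [zero_sub, norm_neg, EuclideanSpace.norm_single] at h1
    simp only [norm_one, mul_one] at h1
    exact le_trans (norm_nonneg _) h1
  -- gradient is continuous
  have hgradcont : Continuous (gradient C) := by
    have : LipschitzWith (Real.toNNReal L) (gradient C) := by
      apply LipschitzWith.of_dist_le_mul
      intro x y
      rw [dist_eq_norm, dist_eq_norm]
      calc ‖gradient C x - gradient C y‖ ≤ L * ‖x - y‖ := hlip x y
        _ = (Real.toNNReal L : ℝ) * ‖x - y‖ := by rw [Real.coe_toNNReal L hLnn]
    exact this.continuous
  -- measurability facts
  have hθsm : ∀ t, StronglyMeasurable (θ t) := fun t => (hadapt t).mono (ℱ.le t)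
  have hgsm : ∀ t, StronglyMeasurable (g t) :=
    fun t => hgradcont.comp_stronglyMeasurable (hθsm t)
  have hevalcont : ∀ k : Fin d, Continuous (fun y : EuclideanSpace ℝ (Fin d) => y k) :=
    fun k => (EuclideanSpace.proj (𝕜 := ℝ) k).continuous
  have hgk_sm : ∀ t k, StronglyMeasurable (fun ω => g t ω k) :=
    fun t k => (hevalcont k).comp_stronglyMeasurable (hgsm t)
  have hgk2_sm : ∀ t k, StronglyMeasurable[ℱ t] (fun ω => (g t ω k) ^ 2) := by
    intro t k
    exact (((hevalcont k).comp_stronglyMeasurable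
      (hgradcont.comp_stronglyMeasurable (hadapt t))).pow 2)
  -- integrability facts
  have hgk2_int : ∀ t k, Integrable (fun ω => (g t ω k) ^ 2) μ := by
    intro t k
    refine Integrable.mono' (hgint t) ((hgk2_sm t k).mono (ℱ.le t)).aestronglyMeasurable ?_
    filter_upwards with ω
    rw [Real.norm_eq_abs, abs_of_nonneg (sq_nonneg _)]
    exact euclid_coord_sq_le (g t ω) k
  have hδg_int : ∀ t k, Integrable (fun ω => δ t ω k * (g t ω k) ^ 2) μ := by
    intro t k
    refine Integrable.mono' (hgint t)
      (((hδmeas t k).aestronglyMeasurable).mul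
        ((hgk_sm t k).pow 2).aestronglyMeasurable) ?_
    filter_upwards [h01 t k] with ω hω
    have hb : ‖δ t ω k * (g t ω k) ^ 2‖ ≤ (g t ω k) ^ 2 := by
      rcases hω with h | h
      · simp only [h, zero_mul, norm_zero]; positivity
      · simp [h, Real.norm_eq_abs, abs_of_nonneg (sq_nonneg (g t ω k))]
    exact hb.trans (euclid_coord_sq_le (g t ω) k)
  have hδint : ∀ t k, Integrable (fun ω => δ t ω k) μ := by
    intro t k
    refine Integrable.mono' (integrable_const 1)
      ((hδmeas t k).aestronglyMeasurable) ?_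
    filter_upwards [h01 t k] with ω hω
    rcases hω with h | h <;> simp [h]
  have hSint : ∀ t, Integrable (S t) μ := by
    intro t
    exact integrable_finset_sum _ (fun k _ => hδg_int t k)
  -- pull-out / tower lemma
  have hpull : ∀ t k, pmin * ∫ ω, (g t ω k) ^ 2 ∂μ ≤ ∫ ω, δ t ω k * (g t ω k) ^ 2 ∂μ := by
    intro t k
    set f : Ω → ℝ := fun ω => (g t ω k) ^ 2 with hf
    set dk : Ω → ℝ := fun ω => δ t ω k with hdk
    have hfd_int : Integrable (f * dk) μ := by
      have := hδg_int t k
      simpa [hf, hdk, Pi.mul_def, mul_comm] using this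
    have hpull' : μ[f * dk | ℱ t] =ᵐ[μ] f * μ[dk | ℱ t] :=
      condExp_mul_of_stronglyMeasurable_left (hgk2_sm t k) hfd_int (hδint t k)
    have hint_eq : ∫ ω, δ t ω k * (g t ω k) ^ 2 ∂μ = ∫ ω, (f * μ[dk | ℱ t]) ω ∂μ := by
      have e1 : ∫ ω, δ t ω k * (g t ω k) ^ 2 ∂μ = ∫ ω, (f * dk) ω ∂μ := by
        apply integral_congr_ae
        filter_upwards with ω
        simp [hf, hdk, Pi.mul_apply, mul_comm]
      rw [e1, ← integral_condExp (ℱ.le t) (f := f * dk)]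
      exact integral_congr_ae hpull'
    rw [hint_eq]
    have hprod_int : Integrable (f * μ[dk | ℱ t]) μ := integrable_condExp.congr hpull'
    rw [← integral_const_mul]
    apply integral_mono_ae ((hgk2_int t k).const_mul pmin) hprod_int
    filter_upwards [hcond t k] with ω hω
    have : pmin * f ω ≤ (μ[dk | ℱ t]) ω * f ω :=
      mul_le_mul_of_nonneg_right hω (sq_nonneg _)
    simpa [Pi.mul_apply, mul_comm] using this
  -- norm squared decomposition in integrals
  have hG_eq : ∀ t, ∫ ω, ‖g t ω‖ ^ 2 ∂μ = ∑ k, ∫ ω, (g t ω k) ^ 2 ∂μ := by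
    intro t
    rw [← integral_finset_sum _ (fun k _ => hgk2_int t k)]
    apply integral_congr_ae
    filter_upwards with ω
    exact euclid_norm_sq_eq (g t ω)
  have hS_eq : ∀ t, ∫ ω, S t ω ∂μ = ∑ k, ∫ ω, δ t ω k * (g t ω k) ^ 2 ∂μ := by
    intro t
    exact integral_finset_sum _ (fun k _ => hδg_int t k)
  have hSlower : ∀ t, pmin * ∫ ω, ‖g t ω‖ ^ 2 ∂μ ≤ ∫ ω, S t ω ∂μ := by
    intro t
    rw [hG_eq, hS_eq, Finset.mul_sum]
    exact Finset.sum_le_sum fun k _ => hpull t k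
  have hSupper : ∀ t, ∫ ω, S t ω ∂μ ≤ ∫ ω, ‖g t ω‖ ^ 2 ∂μ := by
    intro t
    apply integral_mono_ae (hSint t) (hgint t)
    have hall : ∀ᵐ ω ∂μ, ∀ k, δ t ω k = 0 ∨ δ t ω k = 1 := ae_all_iff.mpr (h01 t)
    filter_upwards [hall] with ω hω
    calc S t ω ≤ ∑ k, (g t ω k) ^ 2 := by
          apply Finset.sum_le_sum
          intro k _
          rcases hω k with h | h <;> simp [h, sq_nonneg]
      _ = ‖g t ω‖ ^ 2 := (euclid_norm_sq_eq (g t ω)).symm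
  -- pointwise descent step
  have hstep_ae : ∀ t, ∀ᵐ ω ∂μ,
      C (θ (t + 1) ω) ≤ C (θ t ω) + (L * η ^ 2 / 2 - η) * S t ω := by
    intro t
    have hall : ∀ᵐ ω ∂μ, ∀ k, δ t ω k = 0 ∨ δ t ω k = 1 := ae_all_iff.mpr (h01 t)
    filter_upwards [hupdate t, hall] with ω hupd hω
    set x := θ t ω with hx
    set w : EuclideanSpace ℝ (Fin d) :=
      (WithLp.equiv 2 (Fin d → ℝ)).symm (fun k => δ t ω k * gradient C x k) with hw
    have hsq : ∀ k, δ t ω k * δ t ω k = δ t ω k := by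
      intro k; rcases hω k with h | h <;> simp [h]
    have hθ1 : θ (t + 1) ω = x + (-η) • w := by
      rw [hupd]; rw [neg_smul, ← sub_eq_add_neg]
    have hdesc := descent_lemma C L hdiff hlip x ((-η) • w)
    rw [← hθ1] at hdesc
    have hinner : (inner ℝ (gradient C x) ((-η) • w) : ℝ) = -η * S t ω := by
      rw [real_inner_smul_right]
      congr 1
      rw [PiLp.inner_apply]
      simp only [hw, WithLp.equiv_symm_apply, PiLp.toLp_apply, RCLike.inner_apply, conj_trivial,
        hSdef, hgdef, ← hx]
      apply Finset.sum_congr rfl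
      intro k _
      ring
    have hnw : ‖(-η) • w‖ ^ 2 = η ^ 2 * S t ω := by
      rw [norm_smul, mul_pow]
      have h1 : ‖(-η : ℝ)‖ ^ 2 = η ^ 2 := by
        rw [Real.norm_eq_abs, sq_abs]; ring
      rw [h1]
      congr 1
      rw [← real_inner_self_eq_norm_sq, PiLp.inner_apply]
      simp only [hw, WithLp.equiv_symm_apply, PiLp.toLp_apply, RCLike.inner_apply, conj_trivial,
        hSdef, hgdef, ← hx]
      apply Finset.sum_congr rfl
      intro k _
      have := hsq k
      ring_nf
      nlinarith [hsq k]
    rw [hinner, hnw] at hdesc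
    nlinarith [hdesc]
  -- per-step integral inequality
  have hkey : ∀ t, Cη * ∫ ω, ‖g t ω‖ ^ 2 ∂μ ≤
      (∫ ω, C (θ t ω) ∂μ) - ∫ ω, C (θ (t + 1) ω) ∂μ := by
    intro t
    have h1 : ∫ ω, C (θ (t + 1) ω) ∂μ ≤
        (∫ ω, C (θ t ω) ∂μ) + (L * η ^ 2 / 2 - η) * ∫ ω, S t ω ∂μ := by
      have h2 : ∫ ω, C (θ (t + 1) ω) ∂μ ≤
          ∫ ω, (C (θ t ω) + (L * η ^ 2 / 2 - η) * S t ω) ∂μ :=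
        integral_mono_ae (hCint (t + 1))
          ((hCint t).add ((hSint t).const_mul (L * η ^ 2 / 2 - η))) (hstep_ae t)
      rwa [integral_add (hCint t) ((hSint t).const_mul _), integral_const_mul] at h2
    have hu := hSupper t
    have hl := hSlower t
    set G := ∫ ω, ‖g t ω‖ ^ 2 ∂μ with hGdef
    set Si := ∫ ω, S t ω ∂μ with hSidef
    have e1 : (L * η ^ 2 / 2) * Si ≤ (L * η ^ 2 / 2) * G :=
      mul_le_mul_of_nonneg_left hu (by positivity)
    have e2 : η * (pmin * G) ≤ η * Si := mul_le_mul_of_nonneg_left hl (le_of_lt hη)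
    have e3 : Cη * G = η * (pmin * G) - (L * η ^ 2 / 2) * G := by rw [hCη]; ring
    have e4 : (L * η ^ 2 / 2 - η) * Si = (L * η ^ 2 / 2) * Si - η * Si := by ring
    linarith
  -- telescoping
  have htel : ∀ n : ℕ, ∑ t ∈ Finset.range n, Cη * ∫ ω, ‖g t ω‖ ^ 2 ∂μ ≤
      (∫ ω, C (θ 0 ω) ∂μ) - ∫ ω, C (θ n ω) ∂μ := by
    intro n
    induction n with
    | zero => simp
    | succ n ih =>
      rw [Finset.sum_range_succ]
      linarith [hkey n]
  have hlast : Cstar ≤ ∫ ω, C (θ T ω) ∂μ := by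
    calc Cstar = ∫ _, Cstar ∂μ := by simp
      _ ≤ ∫ ω, C (θ T ω) ∂μ := integral_mono (integrable_const _) (hCint T) fun ω => hbdd _
  rw [le_div_iff₀ hCηpos]
  have htelT := htel T
  rw [← Finset.mul_sum] at htelT
  calc (∑ t ∈ Finset.range T, ∫ ω, ‖gradient C (θ t ω)‖ ^ 2 ∂μ) * Cη
      = Cη * ∑ t ∈ Finset.range T, ∫ ω, ‖g t ω‖ ^ 2 ∂μ := by rw [mul_comm]
    _ ≤ (∫ ω, C (θ 0 ω) ∂μ) - ∫ ω, C (θ T ω) ∂μ := htelT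
    _ ≤ (∫ ω, C (θ 0 ω) ∂μ) - Cstar := by linarith
end

section
/- (General WSBD framework, summed descent inequality.) Let C : ℝ^d → ℝ be L-smooth and bounded below by C*. Let (F_t)_{t≥0} be a filtration, (θ^t)_{t≥0} random vectors with θ^t F_t-measurable, (u_t)_{t≥0} random vectors in ℝ^d, and (δ^t)_{t≥0} random freezing masks, with C(θ^t), ‖∇C(θ^t)‖², and ‖u_t‖² integrable for every t. Suppose there are constants c > 0 and K ≥ 0 such that, almost surely for every t, E[⟨∇C(θ^t), δ^t ⊙ u_t⟩ | F_t] ≥ c ‖∇C(θ^t)‖² and E[‖u_t‖² | F_t] ≤ K, and suppose θ^{t+1} = θ^t − η_t (δ^t ⊙ u_t) almost surely with step sizes η_t > 0. Then for every T ≥ 1, c Σ_{t=0}^{T−1} η_t E[‖∇C(θ^t)‖²] ≤ E[C(θ⁰)] − C* + (LK/2) Σ_{t=0}^{T−1} η_t². -/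
open MeasureTheory
open scoped RealInnerProductSpace

lemma descent_aux {d : ℕ} (C : EuclideanSpace ℝ (Fin d) → ℝ) {L : ℝ} (hL : 0 ≤ L)
    (hdiff : Differentiable ℝ C)
    (hlip : ∀ x y, ‖gradient C x - gradient C y‖ ≤ L * ‖x - y‖)
    (x v : EuclideanSpace ℝ (Fin d)) :
    C (x + v) ≤ C x + ⟪gradient C x, v⟫ + L / 2 * ‖v‖ ^ 2 := by
  have hgc : Continuous (gradient C) := by
    have : LipschitzWith L.toNNReal (gradient C) := by
      apply LipschitzWith.of_dist_le_mul
      intro a b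
      simpa [dist_eq_norm, Real.coe_toNNReal L hL] using hlip a b
    exact this.continuous
  have key : ∀ s : ℝ, HasDerivAt (fun s : ℝ => C (x + s • v))
      ⟪gradient C (x + s • v), v⟫ s := by
    intro s
    have h1 : HasDerivAt (fun s : ℝ => x + s • v) v s := by
      simpa using ((hasDerivAt_id s).smul_const v).const_add x
    have h2 := ((hdiff (x + s • v)).hasGradientAt.hasFDerivAt).comp_hasDerivAt s h1
    have h3 : HasDerivAt (fun s : ℝ => C (x + s • v)) _ s := h2
    simpa using h3
  have hcont : Continuous fun s : ℝ => ⟪gradient C (x + s • v), v⟫ := by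
    exact (hgc.comp (continuous_const.add (continuous_id'.smul continuous_const))).inner
      continuous_const
  have heq : C (x + v) - C x = ∫ s in (0:ℝ)..1, ⟪gradient C (x + s • v), v⟫ := by
    rw [intervalIntegral.integral_eq_sub_of_hasDerivAt (fun s _ => key s)
      (hcont.intervalIntegrable 0 1)]
    simp
  have hmono : ∫ s in (0:ℝ)..1, ⟪gradient C (x + s • v), v⟫ ≤
      ∫ s in (0:ℝ)..1, (⟪gradient C x, v⟫ + L * s * ‖v‖ ^ 2) := by
    apply intervalIntegral.integral_mono_on zero_le_one (hcont.intervalIntegrable 0 1)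
      ((continuous_const.add ((continuous_const.mul continuous_id').mul continuous_const)).intervalIntegrable 0 1)
    intro s hs
    have h3 : ⟪gradient C (x + s • v), v⟫ - ⟪gradient C x, v⟫ ≤ L * s * ‖v‖ ^ 2 := by
      rw [← inner_sub_left]
      calc ⟪gradient C (x + s • v) - gradient C x, v⟫ ≤
          ‖gradient C (x + s • v) - gradient C x‖ * ‖v‖ := real_inner_le_norm _ _
        _ ≤ (L * ‖(x + s • v) - x‖) * ‖v‖ :=
            mul_le_mul_of_nonneg_right (hlip _ _) (norm_nonneg _)
        _ = L * s * ‖v‖ ^ 2 := by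
            rw [add_sub_cancel_left, norm_smul]
            simp [abs_of_nonneg hs.1]
            ring
    show ⟪gradient C (x + s • v), v⟫ ≤ ⟪gradient C x, v⟫ + L * s * ‖v‖ ^ 2
    linarith
  have hval : ∫ s in (0:ℝ)..1, (⟪gradient C x, v⟫ + L * s * ‖v‖ ^ 2) =
      ⟪gradient C x, v⟫ + L / 2 * ‖v‖ ^ 2 := by
    rw [intervalIntegral.integral_add (f := fun _ => ⟪gradient C x, v⟫)
      (g := fun s => L * s * ‖v‖ ^ 2) (by simp)
      (((continuous_const.mul continuous_id').mul continuous_const).intervalIntegrable 0 1)]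
    have : ∫ s in (0:ℝ)..1, L * s * ‖v‖ ^ 2 = L / 2 * ‖v‖ ^ 2 := by
      have : (fun s : ℝ => L * s * ‖v‖ ^ 2) = fun s : ℝ => (L * ‖v‖ ^ 2) * s := by
        funext s; ring
      rw [this, intervalIntegral.integral_const_mul, integral_id]
      ring
    rw [this]; simp
  linarith [heq, hmono, hval]

/-- **General WSBD framework, summed descent inequality.** Let `C : ℝ^d → ℝ`
be `L`-smooth and bounded below by `C*`. Let `(ℱ_t)` be a filtration, `(θ^t)` adapted random
vectors, `(u_t)` random update vectors, and `(δ^t)` random freezing masks (coordinates in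
`{0,1}` a.s.), with `C(θ^t)`, `‖∇C(θ^t)‖²`, `‖u_t‖²` integrable. If there are constants
`c > 0`, `K ≥ 0` with (a.s. for every `t`)
`E[⟨∇C(θ^t), δ^t ⊙ u_t⟩ | ℱ_t] ≥ c ‖∇C(θ^t)‖²` and `E[‖u_t‖² | ℱ_t] ≤ K`, and
`θ^{t+1} = θ^t − η_t (δ^t ⊙ u_t)` a.s. with step sizes `η_t > 0`, then for every `T ≥ 1`,
`c Σ_{t<T} η_t E[‖∇C(θ^t)‖²] ≤ E[C(θ⁰)] − C* + (LK/2) Σ_{t<T} η_t²`. -/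
theorem wsbd_general_summed_bound {Ω : Type*} {m0 : MeasurableSpace Ω}
    (μ : Measure Ω) [IsProbabilityMeasure μ] {d : ℕ} (hd : 0 < d)
    (C : EuclideanSpace ℝ (Fin d) → ℝ) (L Cstar : ℝ)
    (hdiff : Differentiable ℝ C)
    (hlip : ∀ x y, ‖gradient C x - gradient C y‖ ≤ L * ‖x - y‖)
    (hbdd : ∀ x, Cstar ≤ C x)
    (ℱ : Filtration ℕ m0)
    (θ : ℕ → Ω → EuclideanSpace ℝ (Fin d))
    (hadapt : ∀ t, StronglyMeasurable[ℱ t] (θ t))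
    (u : ℕ → Ω → EuclideanSpace ℝ (Fin d))
    (humeas : ∀ t, Measurable (u t))
    (δ : ℕ → Ω → Fin d → ℝ)
    (hδmeas : ∀ t k, Measurable fun ω => δ t ω k)
    (h01 : ∀ t k, ∀ᵐ ω ∂μ, δ t ω k = 0 ∨ δ t ω k = 1)
    (hCint : ∀ t, Integrable (fun ω => C (θ t ω)) μ)
    (hgint : ∀ t, Integrable (fun ω => ‖gradient C (θ t ω)‖ ^ 2) μ)
    (huint : ∀ t, Integrable (fun ω => ‖u t ω‖ ^ 2) μ)
    (c K : ℝ) (hc : 0 < c) (hK : 0 ≤ K)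
    (hdescent : ∀ t, ∀ᵐ ω ∂μ,
      c * ‖gradient C (θ t ω)‖ ^ 2 ≤
        (μ[fun ω' => ⟪gradient C (θ t ω'),
            (WithLp.equiv 2 (Fin d → ℝ)).symm (fun k => δ t ω' k * u t ω' k)⟫ | ℱ t]) ω)
    (hbound : ∀ t, ∀ᵐ ω ∂μ, (μ[fun ω' => ‖u t ω'‖ ^ 2 | ℱ t]) ω ≤ K)
    (η : ℕ → ℝ) (hη : ∀ t, 0 < η t)
    (hupdate : ∀ t, ∀ᵐ ω ∂μ,
      θ (t + 1) ω = θ t ω - η t • (WithLp.equiv 2 (Fin d → ℝ)).symm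
        (fun k => δ t ω k * u t ω k))
    (T : ℕ) (hT : 1 ≤ T) :
    c * ∑ t ∈ Finset.range T, η t * ∫ ω, ‖gradient C (θ t ω)‖ ^ 2 ∂μ ≤
      (∫ ω, C (θ 0 ω) ∂μ) - Cstar + (L * K / 2) * ∑ t ∈ Finset.range T, η t ^ 2 := by
  -- notation
  set v : ℕ → Ω → EuclideanSpace ℝ (Fin d) :=
    fun t ω => (WithLp.equiv 2 (Fin d → ℝ)).symm (fun k => δ t ω k * u t ω k) with hv
  -- L ≥ 0
  have hL : 0 ≤ L := by
    have h := hlip (EuclideanSpace.single ⟨0, hd⟩ (1:ℝ)) (0 : EuclideanSpace ℝ (Fin d))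
    have h1 : ‖(EuclideanSpace.single ⟨0, hd⟩ (1:ℝ)) - (0 : EuclideanSpace ℝ (Fin d))‖ = 1 := by
      rw [sub_zero, EuclideanSpace.norm_single]; norm_num
    rw [h1, mul_one] at h
    exact le_trans (norm_nonneg _) h
  have hgc : Continuous (gradient C) := by
    have : LipschitzWith L.toNNReal (gradient C) := by
      apply LipschitzWith.of_dist_le_mul
      intro a b
      simpa [dist_eq_norm, Real.coe_toNNReal L hL] using hlip a b
    exact this.continuous
  have hns : ∀ w : EuclideanSpace ℝ (Fin d), ‖w‖ ^ 2 = ∑ k, (w k) ^ 2 := by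
    intro w
    rw [EuclideanSpace.norm_eq, Real.sq_sqrt (by positivity)]
    simp [sq_abs]
  -- measurability
  have hθm : ∀ t, Measurable (θ t) := fun t => ((hadapt t).mono (ℱ.le t)).measurable
  have hvm : ∀ t, Measurable (v t) := by
    intro t
    exact (WithLp.measurable_toLp 2 (Fin d → ℝ)).comp (measurable_pi_lambda _ fun k =>
      (hδmeas t k).mul ((measurable_pi_apply k).comp ((WithLp.measurable_ofLp 2 _).comp (humeas t))))
  have hgm : ∀ t, Measurable fun ω => gradient C (θ t ω) :=
    fun t => hgc.measurable.comp (hθm t)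
  -- a.e. norm bound
  have haev : ∀ t, ∀ᵐ ω ∂μ, ‖v t ω‖ ^ 2 ≤ ‖u t ω‖ ^ 2 := by
    intro t
    have := (ae_all_iff).2 (h01 t)
    filter_upwards [this] with ω hω
    rw [hns, hns]
    apply Finset.sum_le_sum
    intro k _
    have hvk : v t ω k = δ t ω k * u t ω k := rfl
    rw [hvk]
    rcases hω k with h | h <;> simp [h, sq_nonneg]
  -- integrability
  have hv2int : ∀ t, Integrable (fun ω => ‖v t ω‖ ^ 2) μ := by
    intro t
    apply Integrable.mono' (huint t) (((hvm t).norm.pow_const 2).aestronglyMeasurable)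
    filter_upwards [haev t] with ω hω
    rw [Real.norm_eq_abs, abs_of_nonneg (sq_nonneg _)]
    exact hω
  have hinner_int : ∀ t,
      Integrable (fun ω => ⟪gradient C (θ t ω), v t ω⟫) μ := by
    intro t
    apply Integrable.mono' (((hgint t).add (huint t)).div_const 2)
      (((hgm t).inner (hvm t)).aestronglyMeasurable)
    filter_upwards [haev t] with ω hω
    have h1 : |⟪gradient C (θ t ω), v t ω⟫| ≤ ‖gradient C (θ t ω)‖ * ‖v t ω‖ :=
      abs_real_inner_le_norm _ _
    have h2 : ‖v t ω‖ ≤ ‖u t ω‖ := by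
      nlinarith [norm_nonneg (v t ω), norm_nonneg (u t ω)]
    simp only [Pi.add_apply, Real.norm_eq_abs]
    nlinarith [norm_nonneg (gradient C (θ t ω)), norm_nonneg (v t ω), norm_nonneg (u t ω),
      sq_nonneg (‖gradient C (θ t ω)‖ - ‖u t ω‖)]
  -- key per-step estimate
  have step : ∀ t, c * (η t * ∫ ω, ‖gradient C (θ t ω)‖ ^ 2 ∂μ) ≤
      (∫ ω, C (θ t ω) ∂μ) - (∫ ω, C (θ (t+1) ω) ∂μ) + (L * K / 2) * η t ^ 2 := by
    intro t
    -- A : c ∫‖g‖² ≤ ∫⟪g,v⟫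
    have hA : c * ∫ ω, ‖gradient C (θ t ω)‖ ^ 2 ∂μ ≤
        ∫ ω, ⟪gradient C (θ t ω), v t ω⟫ ∂μ := by
      have h1 : ∫ ω, c * ‖gradient C (θ t ω)‖ ^ 2 ∂μ ≤
          ∫ ω, (μ[fun ω' => ⟪gradient C (θ t ω'), v t ω'⟫ | ℱ t]) ω ∂μ :=
        integral_mono_ae ((hgint t).const_mul c) integrable_condExp (hdescent t)
      rw [integral_const_mul] at h1
      rwa [integral_condExp (ℱ.le t)] at h1
    -- B : ∫‖v‖² ≤ K
    have hB : ∫ ω, ‖v t ω‖ ^ 2 ∂μ ≤ K := by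
      have h1 : ∫ ω, ‖v t ω‖ ^ 2 ∂μ ≤ ∫ ω, ‖u t ω‖ ^ 2 ∂μ :=
        integral_mono_ae (hv2int t) (huint t) (haev t)
      have h2 : ∫ ω, ‖u t ω‖ ^ 2 ∂μ ≤ K := by
        have h3 : ∫ ω, (μ[fun ω' => ‖u t ω'‖ ^ 2 | ℱ t]) ω ∂μ ≤ ∫ _ω, K ∂μ :=
          integral_mono_ae integrable_condExp (integrable_const K) (hbound t)
        rw [integral_condExp (ℱ.le t)] at h3
        simpa using h3
      linarith
    -- C : pointwise descent
    have hC' : ∀ᵐ ω ∂μ, C (θ (t+1) ω) ≤ C (θ t ω) - η t * ⟪gradient C (θ t ω), v t ω⟫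
        + (L / 2 * η t ^ 2) * ‖v t ω‖ ^ 2 := by
      filter_upwards [hupdate t] with ω hω
      have h1 : θ (t+1) ω = θ t ω + (-(η t • v t ω)) := by
        rw [hω]; abel
      have h2 := descent_aux C hL hdiff hlip (θ t ω) (-(η t • v t ω))
      rw [← h1] at h2
      have h3 : ⟪gradient C (θ t ω), -(η t • v t ω)⟫ =
          -(η t * ⟪gradient C (θ t ω), v t ω⟫) := by
        rw [inner_neg_right, real_inner_smul_right]
      have h4 : ‖-(η t • v t ω)‖ ^ 2 = η t ^ 2 * ‖v t ω‖ ^ 2 := by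
        rw [norm_neg, norm_smul]
        simp [mul_pow, sq_abs]
      rw [h3, h4] at h2
      nlinarith
    have hD : ∫ ω, C (θ (t+1) ω) ∂μ ≤
        (∫ ω, C (θ t ω) ∂μ) - η t * (∫ ω, ⟪gradient C (θ t ω), v t ω⟫ ∂μ)
          + (L / 2 * η t ^ 2) * ∫ ω, ‖v t ω‖ ^ 2 ∂μ := by
      have hi1 : Integrable (fun ω => C (θ t ω) - η t * ⟪gradient C (θ t ω), v t ω⟫) μ := by
        exact (hCint t).sub ((hinner_int t).const_mul (η t))
      have hi2 : Integrable (fun ω => (L / 2 * η t ^ 2) * ‖v t ω‖ ^ 2) μ := by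
        exact (hv2int t).const_mul _
      have hi3 : Integrable (fun ω => η t * ⟪gradient C (θ t ω), v t ω⟫) μ := by
        exact (hinner_int t).const_mul _
      have h1 : ∫ ω, C (θ (t+1) ω) ∂μ ≤
          ∫ ω, (C (θ t ω) - η t * ⟪gradient C (θ t ω), v t ω⟫
            + (L / 2 * η t ^ 2) * ‖v t ω‖ ^ 2) ∂μ :=
        integral_mono_ae (hCint (t+1)) (hi1.add hi2) hC'
      rwa [integral_add hi1 hi2, integral_sub (hCint t) hi3,
        integral_const_mul, integral_const_mul] at h1
    have hE : (L / 2 * η t ^ 2) * ∫ ω, ‖v t ω‖ ^ 2 ∂μ ≤ (L * K / 2) * η t ^ 2 := by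
      have := mul_le_mul_of_nonneg_left hB (by positivity : (0:ℝ) ≤ L / 2 * η t ^ 2)
      nlinarith
    have hF : η t * (c * ∫ ω, ‖gradient C (θ t ω)‖ ^ 2 ∂μ) ≤
        η t * ∫ ω, ⟪gradient C (θ t ω), v t ω⟫ ∂μ :=
      mul_le_mul_of_nonneg_left hA (le_of_lt (hη t))
    nlinarith
  -- assemble
  calc c * ∑ t ∈ Finset.range T, η t * ∫ ω, ‖gradient C (θ t ω)‖ ^ 2 ∂μ
      = ∑ t ∈ Finset.range T, c * (η t * ∫ ω, ‖gradient C (θ t ω)‖ ^ 2 ∂μ) := by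
        rw [Finset.mul_sum]
    _ ≤ ∑ t ∈ Finset.range T, ((∫ ω, C (θ t ω) ∂μ) - (∫ ω, C (θ (t+1) ω) ∂μ)
          + (L * K / 2) * η t ^ 2) := Finset.sum_le_sum fun t _ => step t
    _ = ((∫ ω, C (θ 0 ω) ∂μ) - (∫ ω, C (θ T ω) ∂μ))
          + (L * K / 2) * ∑ t ∈ Finset.range T, η t ^ 2 := by
        rw [Finset.sum_add_distrib, Finset.sum_range_sub' (fun t => ∫ ω, C (θ t ω) ∂μ),
          ← Finset.mul_sum]
    _ ≤ (∫ ω, C (θ 0 ω) ∂μ) - Cstar + (L * K / 2) * ∑ t ∈ Finset.range T, η t ^ 2 := by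
        have h1 : Cstar ≤ ∫ ω, C (θ T ω) ∂μ := by
          have := integral_mono (integrable_const Cstar) (hCint T) (fun ω => hbdd (θ T ω))
          simpa using this
        linarith
end
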